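/- Every uncountable coanalytic (Π¹₁) subset of the reals either contains a perfect subset or has cardinality exactly ℵ₁. -/

import Mathlib

open Cardinal MeasureTheory

namespace CoAnalyticAux

open Set

def cyl (s : List ℕ) : Set (ℕ → ℕ) := {y | ∀ i, (h : i < s.length) → y i = s[i]}

theorem cyl_nil : cyl [] = Set.univ := by
  ext y; simp [cyl]

theorem prefix_of_agree {s t : List ℕ} (hlen : s.length ≤ t.length)
    (h : ∀ i (hi : i < s.length), s[i] = t[i]'(hi.trans_le hlen)) : s <+: t := by
  rw [List.prefix_iff_eq_take]
  apply List.ext_getElem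
  · simp [Nat.le_antisymm, hlen]
  · intro i h1 h2
    simpa using h i h1

theorem self_mem_cyl_ofFn (y : ℕ → ℕ) (n : ℕ) : y ∈ cyl (List.ofFn fun i : Fin n => y i) := by
  intro i hi
  simp only [List.length_ofFn] at hi
  simp [List.getElem_ofFn]

theorem ofFn_prefix_cyl {s : List ℕ} {y : ℕ → ℕ} (hy : y ∈ cyl s) {n : ℕ} (hn : s.length ≤ n) :
    s <+: (List.ofFn fun i : Fin n => y i) := by
  apply prefix_of_agree (by simpa using hn)
  intro i hi
  rw [List.getElem_ofFn]
  exact (hy i hi).symm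

/-- An open subset of Baire space intersected with a cylinder, if it has uncountable image,
contains a strictly longer subcylinder with uncountable image. -/
theorem exists_subcyl {f : (ℕ → ℕ) → ℝ} (s : List ℕ) {O : Set (ℕ → ℕ)} (hO : IsOpen O)
    (h : ¬ (f '' (O ∩ cyl s)).Countable) :
    ∃ t : List ℕ, s <+: t ∧ s.length < t.length ∧ cyl t ⊆ O ∧ ¬ (f '' cyl t).Countable := by
  classical
  set 𝒯 : Set (List ℕ) := {t | s <+: t ∧ s.length < t.length ∧ cyl t ⊆ O} with h𝒯
  have hcover : O ∩ cyl s ⊆ ⋃ t ∈ 𝒯, cyl t := by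
    intro y ⟨hyO, hys⟩
    rcases isOpen_pi_iff.1 hO y hyO with ⟨I, u, hu, hsub⟩
    set n : ℕ := max (s.length + 1) ((I.sup id) + 1) with hn
    refine Set.mem_biUnion (s := 𝒯) (t := fun t => cyl t) ?_ (self_mem_cyl_ofFn y n)
    refine ⟨ofFn_prefix_cyl hys (le_trans (Nat.le_succ _) (le_max_left _ _)), by simp [hn], ?_⟩
    intro z hz
    apply hsub
    intro i hi
    have hilt : i < n := lt_of_lt_of_le (Nat.lt_succ_of_le (Finset.le_sup (f := id) hi))
      (le_max_right _ _)
    have := hz i (by simpa using hilt)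
    rw [this, List.getElem_ofFn]
    exact (hu i hi).2
  by_contra hcon
  push_neg at hcon
  apply h
  have : f '' (O ∩ cyl s) ⊆ ⋃ t ∈ 𝒯, f '' cyl t := by
    rw [← Set.image_iUnion₂]
    exact Set.image_mono hcover
  exact Set.Countable.mono this ((Set.to_countable 𝒯).biUnion fun t ht =>
    hcon t ht.1 ht.2.1 ht.2.2)

/-- An uncountable set of reals has two distinct condensation points. -/
theorem exists_two_condensation {S : Set ℝ} (h : ¬ S.Countable) :
    ∃ a b : ℝ, a ≠ b ∧ (∀ ε > 0, ¬ (S ∩ Metric.ball a ε).Countable) ∧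
      (∀ ε > 0, ¬ (S ∩ Metric.ball b ε).Countable) := by
  classical
  set K : Set ℝ := {x | ∀ ε > 0, ¬ (S ∩ Metric.ball x ε).Countable} with hK
  have hSK : (S \ K).Countable := by
    have hsub : S \ K ⊆ ⋃ p ∈ {p : ℚ × ℚ | (S ∩ Metric.ball (p.1 : ℝ) (p.2 : ℝ)).Countable},
        S ∩ Metric.ball (p.1 : ℝ) (p.2 : ℝ) := by
      intro x ⟨hxS, hxK⟩
      simp only [hK, mem_setOf_eq, not_forall] at hxK
      obtain ⟨ε, hε, hcnt⟩ := hxK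
      rw [not_not] at hcnt
      obtain ⟨q, hq⟩ := exists_rat_near x (show (0:ℝ) < ε/4 by linarith)
      obtain ⟨r, hr1, hr2⟩ := exists_rat_btwn (show (ε/4 : ℝ) < ε/2 by linarith)
      refine Set.mem_biUnion (s := {p : ℚ × ℚ | (S ∩ Metric.ball (p.1:ℝ) (p.2:ℝ)).Countable})
        (t := fun p => S ∩ Metric.ball (p.1:ℝ) (p.2:ℝ)) (x := (q, r)) ?_ ?_
      · refine hcnt.mono (Set.inter_subset_inter_right _ ?_)
        intro z hz
        rw [Metric.mem_ball] at hz ⊢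
        have : dist z x ≤ dist z (q:ℝ) + dist (q:ℝ) x := dist_triangle _ _ _
        have hqx : dist (q:ℝ) x < ε/4 := by rw [dist_comm]; simpa [Real.dist_eq] using hq
        linarith [hz, hr2]
      · refine ⟨hxS, ?_⟩
        rw [Metric.mem_ball, Real.dist_eq]
        have : |x - (q:ℝ)| < ε/4 := hq
        calc |x - (q:ℝ)| < ε/4 := hq
          _ < r := hr1
    exact Set.Countable.mono hsub ((Set.to_countable _).biUnion fun p hp => hp)
  have hSKu : ¬ (S ∩ K).Countable := by
    intro hc
    apply h
    refine ((hSK.union hc).mono) ?_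
    intro x hx
    by_cases hxK : x ∈ K
    · exact Or.inr ⟨hx, hxK⟩
    · exact Or.inl ⟨hx, hxK⟩
  have : ∃ a ∈ S ∩ K, ∃ b ∈ S ∩ K, a ≠ b := by
    by_contra hcon
    push_neg at hcon
    exact hSKu (Set.Subsingleton.countable (fun a ha b hb => by
      by_contra hne; exact hne (hcon a ha b hb)))
  obtain ⟨a, ha, b, hb, hab⟩ := this
  exact ⟨a, b, hab, ha.2, hb.2⟩

variable {f : (ℕ → ℕ) → ℝ}

/-- The property of a good pair of extensions. -/
def Ext (f : (ℕ → ℕ) → ℝ) (s : List ℕ) (ε : ℝ) (p : List ℕ × List ℕ) : Prop :=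
  (s <+: p.1) ∧ (s <+: p.2) ∧ s.length < p.1.length ∧ s.length < p.2.length ∧
  ¬ (f '' cyl p.1).Countable ∧ ¬ (f '' cyl p.2).Countable ∧
  Disjoint (f '' cyl p.1) (f '' cyl p.2) ∧
  (∀ u ∈ f '' cyl p.1, ∀ v ∈ f '' cyl p.1, dist u v ≤ ε) ∧
  (∀ u ∈ f '' cyl p.2, ∀ v ∈ f '' cyl p.2, dist u v ≤ ε)

theorem exists_ext (hf : Continuous f) (s : List ℕ) (hs : ¬ (f '' cyl s).Countable)
    {ε : ℝ} (hε : 0 < ε) : ∃ p, Ext f s ε p := by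
  obtain ⟨a, b, hab, hca, hcb⟩ := exists_two_condensation hs
  set r : ℝ := min (ε / 2) (dist a b / 3) with hr
  have hdab : 0 < dist a b := dist_pos.2 hab
  have hrpos : 0 < r := lt_min (by linarith) (by linarith)
  have hra : ¬ ((f '' cyl s) ∩ Metric.ball a r).Countable := hca r hrpos
  have hrb : ¬ ((f '' cyl s) ∩ Metric.ball b r).Countable := hcb r hrpos
  have himg : ∀ c : ℝ, f '' (f ⁻¹' (Metric.ball c r) ∩ cyl s) = (f '' cyl s) ∩ Metric.ball c r := by
    intro c
    rw [Set.inter_comm, Set.image_inter_preimage, Set.inter_comm]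
  obtain ⟨t₀, hp0, hl0, hs0, hu0⟩ := exists_subcyl s (Metric.isOpen_ball.preimage hf)
    (by rw [himg a]; exact hra)
  obtain ⟨t₁, hp1, hl1, hs1, hu1⟩ := exists_subcyl s (Metric.isOpen_ball.preimage hf)
    (by rw [himg b]; exact hrb)
  have hball : ∀ (t : List ℕ) (c : ℝ), cyl t ⊆ f ⁻¹' (Metric.ball c r) →
      f '' cyl t ⊆ Metric.ball c r := by
    intro t c h x ⟨y, hy, hxy⟩
    rw [← hxy]; exact h hy
  have hb0 := hball t₀ a hs0
  have hb1 := hball t₁ b hs1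
  refine ⟨(t₀, t₁), hp0, hp1, hl0, hl1, hu0, hu1, ?_, ?_, ?_⟩
  · refine Set.disjoint_left.2 fun x hx0 hx1 => ?_
    have h0 := hb0 hx0
    have h1 := hb1 hx1
    rw [Metric.mem_ball] at h0 h1
    have : dist a b ≤ dist a x + dist x b := dist_triangle _ _ _
    have hxa : dist a x < r := by rwa [dist_comm]
    have hxb : dist x b < r := h1
    have h3 : r ≤ dist a b / 3 := min_le_right _ _
    linarith
  · intro u hu v hv
    have h1 := hb0 hu; have h2 := hb0 hv
    rw [Metric.mem_ball] at h1 h2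
    have : dist u v ≤ dist u a + dist a v := dist_triangle _ _ _
    have h3 : r ≤ ε / 2 := min_le_left _ _
    have h4 : dist a v < r := by rwa [dist_comm] at h2
    linarith [h1]
  · intro u hu v hv
    have h1 := hb1 hu; have h2 := hb1 hv
    rw [Metric.mem_ball] at h1 h2
    have : dist u v ≤ dist u b + dist b v := dist_triangle _ _ _
    have h3 : r ≤ ε / 2 := min_le_left _ _
    have h4 : dist b v < r := by rwa [dist_comm] at h2
    linarith [h1]

open scoped Classical in
noncomputable def stepP (f : (ℕ → ℕ) → ℝ) (s : List ℕ) (ε : ℝ) : List ℕ × List ℕ :=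
  if h : Continuous f ∧ ¬ (f '' cyl s).Countable ∧ 0 < ε then
    Classical.choose (exists_ext h.1 s h.2.1 h.2.2)
  else (s, s)

theorem stepP_spec (hf : Continuous f) {s : List ℕ} (hs : ¬ (f '' cyl s).Countable)
    {ε : ℝ} (hε : 0 < ε) : Ext f s ε (stepP f s ε) := by
  rw [stepP]
  rw [dif_pos ⟨hf, hs, hε⟩]
  exact Classical.choose_spec (exists_ext hf s hs hε)

/-- The scheme of finite sequences, indexed by reversed finite boolean paths. -/
noncomputable def sch (f : (ℕ → ℕ) → ℝ) : List Bool → List ℕ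
  | [] => []
  | b :: w => bif b then (stepP f (sch f w) ((1/2) ^ (w.length + 1))).2
              else (stepP f (sch f w) ((1/2) ^ (w.length + 1))).1

variable (hf : Continuous f) (hA : ¬ (Set.range f).Countable)
include hf hA

theorem sch_unc : ∀ w : List Bool, ¬ (f '' cyl (sch f w)).Countable := by
  intro w
  induction w with
  | nil =>
      have : cyl ([] : List ℕ) = Set.univ := by
        ext y; simp [cyl_nil]
      simpa [sch, this, Set.image_univ] using hA
  | cons b w ih =>
      have hspec := stepP_spec hf ih (ε := (1/2) ^ (w.length + 1)) (by positivity)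
      cases b
      · simpa [sch] using hspec.2.2.2.2.1
      · simpa [sch] using hspec.2.2.2.2.2.1

theorem sch_prefix_cons (b : Bool) (w : List Bool) : sch f w <+: sch f (b :: w) := by
  have hspec := stepP_spec hf (sch_unc hf hA w) (ε := (1/2) ^ (w.length + 1)) (by positivity)
  cases b
  · simpa [sch] using hspec.1
  · simpa [sch] using hspec.2.1

theorem sch_len_cons (b : Bool) (w : List Bool) :
    (sch f w).length < (sch f (b :: w)).length := by
  have hspec := stepP_spec hf (sch_unc hf hA w) (ε := (1/2) ^ (w.length + 1)) (by positivity)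
  cases b
  · simpa [sch] using hspec.2.2.1
  · simpa [sch] using hspec.2.2.2.1

theorem sch_len (w : List Bool) : w.length ≤ (sch f w).length := by
  induction w with
  | nil => simp [sch]
  | cons b w ih => simpa using Nat.lt_of_le_of_lt ih (sch_len_cons hf hA b w)

theorem sch_suffix {w w' : List Bool} (h : w <:+ w') : sch f w <+: sch f w' := by
  induction w' with
  | nil => rw [List.suffix_nil.1 h]
  | cons b w'' ih =>
      rcases List.suffix_cons_iff.1 h with h1 | h2
      · rw [h1]
      · exact (ih h2).trans (sch_prefix_cons hf hA b w'')

theorem sch_disj (w : List Bool) :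
    Disjoint (f '' cyl (sch f (false :: w))) (f '' cyl (sch f (true :: w))) := by
  have hspec := stepP_spec hf (sch_unc hf hA w) (ε := (1/2) ^ (w.length + 1)) (by positivity)
  simpa [sch] using hspec.2.2.2.2.2.2.1

theorem sch_diam (b : Bool) (w : List Bool) :
    ∀ u ∈ f '' cyl (sch f (b :: w)), ∀ v ∈ f '' cyl (sch f (b :: w)),
      dist u v ≤ (1/2) ^ (w.length + 1) := by
  have hspec := stepP_spec hf (sch_unc hf hA w) (ε := (1/2) ^ (w.length + 1)) (by positivity)
  cases b
  · simpa [sch] using hspec.2.2.2.2.2.2.2.1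
  · simpa [sch] using hspec.2.2.2.2.2.2.2.2

omit hf hA

/-- Reversed prefix of an infinite boolean sequence. -/
def pre (x : ℕ → Bool) : ℕ → List Bool
  | 0 => []
  | n + 1 => x n :: pre x n

@[simp] theorem pre_length (x : ℕ → Bool) (n : ℕ) : (pre x n).length = n := by
  induction n with
  | zero => rfl
  | succ n ih => simp [pre, ih]

theorem pre_suffix (x : ℕ → Bool) {m n : ℕ} (h : m ≤ n) : pre x m <:+ pre x n := by
  induction n with
  | zero => rw [Nat.le_zero.1 h]
  | succ n ih =>
      rcases Nat.lt_or_ge m (n+1) with h1 | h2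
      · exact (ih (Nat.lt_succ_iff.1 h1)).trans ⟨[x n], rfl⟩
      · rw [Nat.le_antisymm h (by exact h2)]

theorem pre_congr {x x' : ℕ → Bool} {n : ℕ} (h : ∀ i < n, x i = x' i) :
    pre x n = pre x' n := by
  induction n with
  | zero => rfl
  | succ n ih =>
      simp only [pre]
      rw [h n (Nat.lt_succ_self n), ih fun i hi => h i (hi.trans (Nat.lt_succ_self n))]

/-- The branch of the scheme determined by an infinite boolean sequence. -/
noncomputable def br (f : (ℕ → ℕ) → ℝ) (x : ℕ → Bool) : ℕ → ℕ :=
  fun i => (sch f (pre x (i + 1))).getD i 0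

include hf hA

theorem br_mem_cyl (x : ℕ → Bool) (n : ℕ) : br f x ∈ cyl (sch f (pre x n)) := by
  simp only [cyl, Set.mem_setOf_eq]
  intro i hi
  have h1 : i < (sch f (pre x (i+1))).length :=
    Nat.lt_of_lt_of_le (Nat.lt_succ_self i) (by simpa using sch_len hf hA (pre x (i+1)))
  have key : ∀ {L1 L2 : List ℕ}, L1 <+: L2 → ∀ (hi1 : i < L1.length) (hi2 : i < L2.length),
      L1.getD i 0 = L2[i] := by
    intro L1 L2 hp hi1 hi2
    rw [List.getD_eq_getElem L1 0 hi1]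
    exact hp.getElem hi1
  rcases Nat.le_total n (i+1) with h | h
  · have hp := sch_suffix hf hA (pre_suffix x h)
    show (sch f (pre x (i+1))).getD i 0 = _
    rw [List.getD_eq_getElem _ 0 h1, ← hp.getElem hi]
  · have hp := sch_suffix hf hA (pre_suffix x h)
    exact key hp h1 (Nat.lt_of_lt_of_le h1 hp.length_le)

theorem br_image (x : ℕ → Bool) (n : ℕ) : f (br f x) ∈ f '' cyl (sch f (pre x n)) :=
  Set.mem_image_of_mem f (br_mem_cyl hf hA x n)

theorem cantor_inj :
    ∃ g : (ℕ → Bool) → ℝ, Set.range g ⊆ Set.range f ∧ Continuous g ∧ Function.Injective g := by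
  refine ⟨fun x => f (br f x), ?_, ?_, ?_⟩
  · rintro z ⟨x, rfl⟩; exact Set.mem_range_self _
  · rw [continuous_iff_continuousAt]
    intro x
    rw [Metric.continuousAt_iff']
    intro ε hε
    obtain ⟨m, hm⟩ := exists_pow_lt_of_lt_one hε (show (1/2 : ℝ) < 1 by norm_num)
    have hU : {x' : ℕ → Bool | ∀ i < m + 1, x' i = x i} ∈ nhds x := by
      have : {x' : ℕ → Bool | ∀ i < m + 1, x' i = x i} =
          ⋂ i ∈ Finset.range (m+1), (fun x' : ℕ → Bool => x' i) ⁻¹' {x i} := by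
        ext x'; simp [Set.mem_iInter]
      rw [this]
      exact Filter.biInter_finset_mem _ |>.2 fun i _ =>
        (continuous_apply i).continuousAt.preimage_mem_nhds (by simp)
    filter_upwards [hU] with x' hx'
    have hpre : pre x' (m+1) = pre x (m+1) := pre_congr hx'
    have h1 := br_image hf hA x (m+1)
    have h2 := br_image hf hA x' (m+1)
    rw [hpre] at h2
    have := sch_diam hf hA (x m) (pre x m) _ h2 _ h1
    have hd : dist (f (br f x')) (f (br f x)) ≤ (1/2) ^ (m+1) := by
      simpa using this
    calc dist (f (br f x')) (f (br f x)) ≤ (1/2) ^ (m+1) := hd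
      _ ≤ (1/2) ^ m := by
          apply pow_le_pow_of_le_one (by norm_num) (by norm_num)
          omega
      _ < ε := hm
  · intro x x' hxx'
    by_contra hne
    have hex : ∃ n, x n ≠ x' n := by
      by_contra hc
      push_neg at hc
      exact hne (funext hc)
    set n := Nat.find hex with hn
    have hagree : ∀ i < n, x i = x' i := fun i hi => by
      have := Nat.find_min hex hi
      simpa using this
    have hpre : pre x n = pre x' n := pre_congr hagree
    have hne' : x n ≠ x' n := Nat.find_spec hex
    have h1 : f (br f x) ∈ f '' cyl (sch f (x n :: pre x n)) := br_image hf hA x (n+1)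
    have h2 : f (br f x') ∈ f '' cyl (sch f (x' n :: pre x n)) := by
      have := br_image hf hA x' (n+1)
      rwa [show pre x' (n+1) = x' n :: pre x' n from rfl, ← hpre] at this
    have hxx'' : f (br f x) = f (br f x') := hxx'
    rw [hxx''] at h1
    cases hb : x n <;> cases hb' : x' n
    · exact hne' (by rw [hb, hb'])
    · rw [hb] at h1; rw [hb'] at h2
      exact (sch_disj hf hA (pre x n)).ne_of_mem h1 h2 rfl |>.elim
    · rw [hb] at h1; rw [hb'] at h2
      exact (sch_disj hf hA (pre x n)).ne_of_mem h2 h1 rfl |>.elim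
    · exact hne' (by rw [hb, hb'])

omit hf hA


/-- The tree associated to a point: `s` is in the tree of `x` if some sequence extending `s`
has image within `(1/2)^|s|` of `x`. -/
def Tr (f : (ℕ → ℕ) → ℝ) (x : ℝ) (s : List ℕ) : Prop :=
  ∃ y ∈ cyl s, dist (f y) x < (1/2) ^ s.length

/-- One-step extension relation within the tree of `x`. -/
def rel (f : (ℕ → ℕ) → ℝ) (x : ℝ) (a b : List ℕ) : Prop :=
  (∃ n, a = b ++ [n]) ∧ Tr f x a

theorem isOpen_Tr (hf : Continuous f) (s : List ℕ) : IsOpen {x | Tr f x s} := by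
  have : {x | Tr f x s} = ⋃ y ∈ cyl s, Metric.ball (f y) ((1/2) ^ s.length) := by
    ext x
    simp only [Tr, mem_setOf_eq, Set.mem_iUnion, Metric.mem_ball, exists_prop]
    constructor
    · rintro ⟨y, hy, hd⟩; exact ⟨y, hy, by rwa [dist_comm]⟩
    · rintro ⟨y, hy, hd⟩; exact ⟨y, hy, by rwa [dist_comm]⟩
  rw [this]
  exact isOpen_biUnion fun _ _ => Metric.isOpen_ball

theorem rel_wf {A : Set ℝ} (hf : Continuous f) (hrange : Set.range f = Aᶜ)
    {x : ℝ} (hx : x ∈ A) : WellFounded (rel f x) := by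
  by_contra hcon
  have hbad : ∃ a, ¬ Acc (rel f x) a := by
    by_contra h
    push_neg at h
    exact hcon ⟨h⟩
  obtain ⟨a₀, ha₀⟩ := hbad
  have hF : ∀ p : {a : List ℕ // ¬ Acc (rel f x) a}, ∃ q : {a : List ℕ // ¬ Acc (rel f x) a},
      rel f x q.1 p.1 := by
    rintro ⟨b, hb⟩
    obtain ⟨c, hc1, hc2⟩ := exists_not_acc_lt_of_not_acc hb
    exact ⟨⟨c, hc1⟩, hc2⟩
  choose F hstep' using hF
  set a : ℕ → List ℕ := fun n => (F^[n] ⟨a₀, ha₀⟩).1 with ha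
  have hstep : ∀ n, rel f x (a (n+1)) (a n) := by
    intro n
    have : F^[n+1] ⟨a₀, ha₀⟩ = F (F^[n] ⟨a₀, ha₀⟩) := Function.iterate_succ_apply' F n _
    rw [ha]
    simp only [this]
    exact hstep' _
  have hpre : ∀ n, a n <+: a (n+1) := by
    intro n
    obtain ⟨k, hk⟩ := (hstep n).1
    exact ⟨[k], hk.symm⟩
  have hmono : ∀ m n, m ≤ n → a m <+: a n := by
    intro m n h
    induction n with
    | zero => rw [Nat.le_zero.1 h]
    | succ n ih =>
        rcases Nat.lt_or_ge m (n+1) with h1 | h2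
        · exact (ih (Nat.lt_succ_iff.1 h1)).trans (hpre n)
        · rw [Nat.le_antisymm h h2]
  have hlen : ∀ n, (a 0).length + n = (a n).length := by
    intro n
    induction n with
    | zero => rfl
    | succ n ih =>
        obtain ⟨k, hk⟩ := (hstep n).1
        rw [hk]
        simp [← ih]
        omega
  have hlen' : ∀ n, n ≤ (a n).length := fun n => by
    have := hlen n; omega
  set y : ℕ → ℕ := fun i => (a (i+1)).getD i 0 with hy
  have hymem : ∀ n, y ∈ cyl (a n) := by
    intro n
    simp only [cyl, mem_setOf_eq]
    intro i hi
    have h1 : i < (a (i+1)).length := Nat.lt_of_lt_of_le (Nat.lt_succ_self i) (hlen' (i+1))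
    rcases Nat.le_total n (i+1) with h | h
    · have hp := hmono n (i+1) h
      show (a (i+1)).getD i 0 = _
      rw [List.getD_eq_getElem _ 0 h1, ← hp.getElem hi]
    · have hp := hmono (i+1) n h
      show (a (i+1)).getD i 0 = _
      rw [List.getD_eq_getElem _ 0 h1]
      exact hp.getElem h1
  choose yk hykmem hykdist using fun k => (hstep k).2
  have hktend : Filter.Tendsto yk Filter.atTop (nhds y) := by
    rw [tendsto_pi_nhds]
    intro i
    apply tendsto_const_nhds.congr'
    filter_upwards [Filter.eventually_ge_atTop i] with k hk
    have h1 : i < (a (k+1)).length := Nat.lt_of_lt_of_le (Nat.lt_succ_of_le hk) (hlen' (k+1))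
    have h2 : i < (a (i+1)).length := Nat.lt_of_lt_of_le (Nat.lt_succ_self i) (hlen' (i+1))
    have hp := hmono (i+1) (k+1) (by omega)
    have hyi : y i = (a (i+1))[i] := List.getD_eq_getElem _ 0 h2
    have hyki : yk k i = (a (k+1))[i]'h1 := hykmem k i h1
    rw [hyi, hyki, hp.getElem h2]
  have htf : Filter.Tendsto (fun k => f (yk k)) Filter.atTop (nhds (f y)) :=
    (hf.tendsto y).comp hktend
  have htx : Filter.Tendsto (fun k => f (yk k)) Filter.atTop (nhds x) := by
    rw [Metric.tendsto_atTop]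
    intro ε hε
    obtain ⟨N, hN⟩ := exists_pow_lt_of_lt_one hε (show (1/2 : ℝ) < 1 by norm_num)
    refine ⟨N, fun k hk => ?_⟩
    have h1 : dist (f (yk k)) x < (1/2) ^ (a (k+1)).length := hykdist k
    have h2 : ((1:ℝ)/2) ^ (a (k+1)).length ≤ (1/2) ^ N := by
      apply pow_le_pow_of_le_one (by norm_num) (by norm_num)
      have := hlen' (k+1); omega
    linarith
  have : f y = x := tendsto_nhds_unique htf htx
  have : x ∈ Aᶜ := by rw [← hrange, ← this]; exact Set.mem_range_self y
  exact this hx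

/-- The Borel approximations to `A`. -/
noncomputable def Dset (f : (ℕ → ℕ) → ℝ) (α : Ordinal.{0}) (s : List ℕ) : Set ℝ :=
  ⋂ n : ℕ, ({x | ¬ Tr f x (s ++ [n])} ∪
    ⋃ β : {β : Ordinal.{0} // β < α}, Dset f β.1 (s ++ [n]))
termination_by α
decreasing_by exact β.2


theorem Dset_def (f : (ℕ → ℕ) → ℝ) (α : Ordinal.{0}) (s : List ℕ) :
    Dset f α s = ⋂ n : ℕ, ({x | ¬ Tr f x (s ++ [n])} ∪
      ⋃ β : {β : Ordinal.{0} // β < α}, Dset f β.1 (s ++ [n])) := by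
  rw [Dset]

theorem Dset_mono {β α : Ordinal.{0}} (h : β ≤ α) (s : List ℕ) :
    Dset f β s ⊆ Dset f α s := by
  intro x hx
  rw [Dset_def] at hx ⊢
  rw [Set.mem_iInter] at hx ⊢
  intro n
  rcases hx n with h1 | h2
  · exact Or.inl h1
  · obtain ⟨⟨γ, hγ⟩, hmem⟩ := Set.mem_iUnion.1 h2
    exact Or.inr (Set.mem_iUnion.2 ⟨⟨γ, hγ.trans_le h⟩, hmem⟩)

theorem countable_subtype_lt {α : Ordinal.{0}} (h : α < (aleph 1).ord) :
    Countable {β : Ordinal.{0} // β < α} := by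
  have h1 : α.card < aleph 1 := Cardinal.lt_ord.1 h
  have h2 : α.card ≤ ℵ₀ := by
    rwa [← Cardinal.succ_aleph0, Order.lt_succ_iff] at h1
  have h3 : #{β : Ordinal.{0} // β < α} ≤ ℵ₀ := by
    have := Ordinal.mk_Iio_ordinal α
    have heq : #{β : Ordinal.{0} // β < α} = #(Set.Iio α) := rfl
    rw [heq, this]
    exact le_of_le_of_eq (Cardinal.lift_le.2 h2) Cardinal.lift_aleph0
  exact Cardinal.mk_le_aleph0_iff.1 h3

theorem Dset_measurableSet (hf : Continuous f) :
    ∀ α : Ordinal.{0}, α < (aleph 1).ord → ∀ s : List ℕ, MeasurableSet (Dset f α s) := by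
  intro α
  induction α using Ordinal.induction with
  | h α IH =>
    intro h s
    rw [Dset_def]
    apply MeasurableSet.iInter
    intro n
    apply MeasurableSet.union
    · have : {x | ¬ Tr f x (s ++ [n])} = {x | Tr f x (s ++ [n])}ᶜ := rfl
      rw [this]
      exact (isOpen_Tr hf _).measurableSet.compl
    · haveI := countable_subtype_lt h
      exact MeasurableSet.iUnion fun β => IH β.1 β.2 (β.2.trans h) _

/-- If `x ∈ A`, then `x` belongs to the approximation at the rank of its tree. -/
theorem mem_Dset_rank {A : Set ℝ} (hf : Continuous f) (hrange : Set.range f = Aᶜ)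
    {x : ℝ} (hx : x ∈ A) (s : List ℕ) :
    x ∈ Dset f (((rel_wf hf hrange hx).apply s).rank) s := by
  induction s using (rel_wf hf hrange hx).induction with
  | _ s IH =>
    rw [Dset_def, Set.mem_iInter]
    intro n
    by_cases hT : Tr f x (s ++ [n])
    · have hrel : rel f x (s ++ [n]) s := ⟨⟨n, rfl⟩, hT⟩
      refine Or.inr (Set.mem_iUnion.2 ⟨⟨((rel_wf hf hrange hx).apply (s ++ [n])).rank, ?_⟩, IH _ hrel⟩)
      have := Acc.rank_lt_of_rel ((rel_wf hf hrange hx).apply s) hrel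
      convert this using 2
    · exact Or.inl hT

/-- Every approximation is contained in `A`. -/
theorem Dset_subset {A : Set ℝ} (hrange : Set.range f = Aᶜ) (α : Ordinal.{0}) :
    Dset f α [] ⊆ A := by
  intro x hx
  by_contra hxA
  have hxc : x ∈ Aᶜ := hxA
  rw [← hrange] at hxc
  obtain ⟨y, hy⟩ := hxc
  have key : ∀ α : Ordinal.{0}, ∀ n : ℕ, x ∉ Dset f α (List.ofFn fun i : Fin n => y i) := by
    intro α
    induction α using Ordinal.induction with
    | h α IH =>
      intro n hmem
      rw [Dset_def, Set.mem_iInter] at hmem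
      have hofn : (List.ofFn fun i : Fin n => y i) ++ [y n] =
          (List.ofFn fun i : Fin (n+1) => y i) := by
        rw [List.ofFn_succ']
        simp [List.concat_eq_append]
      rcases hmem (y n) with h1 | h2
      · apply h1
        rw [hofn]
        refine ⟨y, self_mem_cyl_ofFn y (n+1), ?_⟩
        · rw [hy]
          simpa using pow_pos (show (0:ℝ) < 1/2 by norm_num) _
      · obtain ⟨⟨β, hβ⟩, hmem'⟩ := Set.mem_iUnion.1 h2
        rw [hofn] at hmem'
        exact IH β hβ (n+1) hmem'
  exact key α 0 hx

theorem rank_lt_omega1 {γ : Type} [Countable γ] {r : γ → γ → Prop} (hwf : WellFounded r)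
    (a : γ) : (hwf.apply a).rank < (aleph 1).ord := by
  induction a using hwf.induction with
  | _ a IH =>
    rw [Acc.rank_eq, Cardinal.ord_aleph]
    apply Ordinal.iSup_lt_omega_one
    intro b
    have : ((hwf.apply a).inv b.2).rank = (hwf.apply b.1).rank := by congr 1
    rw [this]
    rw [← Cardinal.ord_aleph]
    exact (Cardinal.isSuccLimit_ord (Cardinal.aleph0_le_aleph 1)).succ_lt (IH b.1 b.2)

/-- The perfect set property for analytic subsets of the reals. -/
theorem analyticSet_psp {B : Set ℝ} (hB : AnalyticSet B) (hunc : ¬ B.Countable) :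
    ∃ C ⊆ B, Perfect C ∧ C.Nonempty := by
  rw [AnalyticSet_def] at hB
  rcases hB with hempty | ⟨f, hf, hrange⟩
  · exact absurd (by rw [hempty]; exact Set.countable_empty) hunc
  · have hA' : ¬ (Set.range f).Countable := by rwa [hrange]
    obtain ⟨g, hgr, hgc, hgi⟩ := cantor_inj hf hA'
    have hcpt : IsCompact (Set.range g) := isCompact_range hgc
    have hKunc : ¬ (Set.range g).Countable := by
      intro hc
      haveI := hc.to_subtype
      have hcnt : Countable (ℕ → Bool) := Countable.of_equiv _ (Equiv.ofInjective g hgi).symm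
      have h2 := Cardinal.mk_le_aleph0_iff.mpr hcnt
      have h3 : #(ℕ → Bool) = 2 ^ ℵ₀ := by rw [Cardinal.mk_arrow]; simp
      rw [h3] at h2
      exact absurd (Cardinal.cantor ℵ₀) (not_lt.2 h2)
    obtain ⟨D, hD, hDne, hDK⟩ :=
      exists_perfect_nonempty_of_isClosed_of_not_countable hcpt.isClosed hKunc
    exact ⟨D, (hDK.trans hgr).trans (by rw [hrange]), hD, hDne⟩

end CoAnalyticAux

open CoAnalyticAux in
/-- Every uncountable coanalytic (`Π¹₁`) subset of the reals either contains a
nonempty perfect subset or has cardinality exactly `ℵ₁`. -/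
theorem uncountable_coanalytic_perfect_or_aleph_one (A : Set ℝ)
    (hco : AnalyticSet Aᶜ) (hunc : ¬ A.Countable) :
    (∃ C ⊆ A, Perfect C ∧ C.Nonempty) ∨ #A = aleph 1 := by
  classical
  rw [AnalyticSet_def] at hco
  rcases hco with hempty | ⟨f, hf, hrange⟩
  · left
    have hA : A = Set.univ := by
      rw [← Set.compl_empty, ← hempty, compl_compl]
    obtain ⟨D, hD, hDne, hDsub⟩ :=
      exists_perfect_nonempty_of_isClosed_of_not_countable isClosed_univ
        (by rw [← hA]; exact hunc)
    exact ⟨D, by rw [hA]; exact hDsub, hD, hDne⟩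
  · by_cases hp : ∃ α : Ordinal.{0}, α < (aleph 1).ord ∧ ¬ (Dset f α []).Countable
    · left
      obtain ⟨α, hα, hcnt⟩ := hp
      obtain ⟨C, hC, hCp, hCne⟩ :=
        analyticSet_psp (Dset_measurableSet hf α hα []).analyticSet hcnt
      exact ⟨C, hC.trans (Dset_subset hrange α), hCp, hCne⟩
    · right
      push_neg at hp
      -- upper bound
      have hcover : ∀ x ∈ A, ∃ α : Ordinal.{0}, α < (aleph 1).ord ∧ x ∈ Dset f α [] := by
        intro x hx
        exact ⟨((rel_wf hf hrange hx).apply []).rank,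
          rank_lt_omega1 (rel_wf hf hrange hx) [], mem_Dset_rank hf hrange hx []⟩
      set ordOf : (aleph 1).ord.ToType → Ordinal.{0} :=
        fun i => (((Ordinal.ToType.mk (o := (aleph 1).ord)).symm i : Set.Iio (aleph 1).ord) :
          Ordinal.{0}) with hordOf
      have hordOf_lt : ∀ i, ordOf i < (aleph 1).ord := fun i =>
        ((Ordinal.ToType.mk (o := (aleph 1).ord)).symm i).2
      set g : (aleph 1).ord.ToType × ℕ → ℝ := fun p =>
        if h : (Dset f (ordOf p.1) []).Nonempty then
          Classical.choose ((hp _ (hordOf_lt p.1)).exists_eq_range h) p.2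
        else 0 with hg
      have hsub : A ⊆ Set.range g := by
        intro x hx
        obtain ⟨α, hα, hmem⟩ := hcover x hx
        set i := Ordinal.ToType.mk (o := (aleph 1).ord) ⟨α, hα⟩ with hi
        have hio : ordOf i = α := by
          rw [hordOf]
          simp [hi]
        have hne : (Dset f (ordOf i) []).Nonempty := ⟨x, by rwa [hio]⟩
        have hspec := Classical.choose_spec ((hp _ (hordOf_lt i)).exists_eq_range hne)
        have : x ∈ Set.range (Classical.choose ((hp _ (hordOf_lt i)).exists_eq_range hne)) := by
          rw [← hspec, hio]; exact hmem
        obtain ⟨n, hn⟩ := this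
        refine ⟨(i, n), ?_⟩
        rw [hg]
        simp only
        rw [dif_pos hne]
        exact hn
      have hupper : #A ≤ aleph 1 := by
        calc #A ≤ #(Set.range g) := Cardinal.mk_le_mk_of_subset hsub
          _ ≤ #((aleph 1).ord.ToType × ℕ) := Cardinal.mk_range_le
          _ = aleph 1 * ℵ₀ := by
              rw [Cardinal.mk_prod]
              simp [Cardinal.mk_toType, Cardinal.card_ord]
          _ = aleph 1 := by
              rw [Cardinal.mul_eq_max (Cardinal.aleph0_le_aleph 1) le_rfl]
              exact max_eq_left (Cardinal.aleph0_le_aleph 1)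
      have hlower : aleph 1 ≤ #A := by
        rw [Cardinal.countable_iff_lt_aleph_one] at hunc
        exact not_lt.1 hunc
      exact le_antisymm hupper hlower
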